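/- If an oriented star K⃗_{1,n} with n ≥ 2 is {1,2}-antimagic, then it has exactly one leaf that is a sink and exactly one leaf that is a source; in particular n = 2. -/

import Mathlib

/-- `relPow A k u v` : there is a directed walk of length `k` from `u` to `v`
along the arc relation `A`. -/
def relPow {V : Type*} (A : V → V → Prop) : ℕ → V → V → Prop
  | 0 => fun u v => u = v
  | k + 1 => fun u v => ∃ w, A u w ∧ relPow A k w v

/-- `distEq A u v k` : the directed distance from `u` to `v` is exactly `k`,
i.e. `k` is the length of a shortest directed path from `u` to `v`. -/
def distEq {V : Type*} (A : V → V → Prop) (u v : V) (k : ℕ) : Prop :=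
  relPow A k u v ∧ ∀ j < k, ¬ relPow A j u v

open Classical in
/-- The `D`-weight of vertex `u` under labeling `g`: the sum of the labels of all
vertices whose directed distance from `u` lies in `D`. -/
noncomputable def weightD {V : Type*} [Fintype V] (A : V → V → Prop) (D : Set ℕ)
    (g : V → ℕ) (u : V) : ℕ :=
  ∑ v : V, if ∃ k ∈ D, distEq A u v k then g v else 0

/-- A directed graph (given by its arc relation `A`) is `D`-antimagic if there is a
bijective labeling of the vertices with `{1, …, |V|}` whose `D`-weights are pairwise
distinct. -/
def IsDAntimagic {V : Type*} [Fintype V] (A : V → V → Prop) (D : Set ℕ) : Prop :=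
  ∃ g : V → ℕ, Set.BijOn g Set.univ (Set.Icc 1 (Fintype.card V)) ∧
    Function.Injective (weightD A D g)

/-- A vertex is a source if all its incident arcs are outgoing (no incoming arcs). -/
def IsSource {V : Type*} (A : V → V → Prop) (u : V) : Prop := ∀ v, ¬ A v u

/-- A vertex is a sink if all its incident arcs are incoming (no outgoing arcs). -/
def IsSink {V : Type*} (A : V → V → Prop) (u : V) : Prop := ∀ v, ¬ A u v

/-- The oriented star `K⃗_{1,n}`: vertices are `Option (Fin n)`, with `none` the center
and `some i` the leaves; `σ i = true` iff leaf `i` is a source (its arc points to the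
center), and `σ i = false` iff leaf `i` is a sink. -/
def starArc (n : ℕ) (σ : Fin n → Bool) :
    Option (Fin n) → Option (Fin n) → Prop :=
  fun u w => ∃ i : Fin n,
    (u = some i ∧ w = none ∧ σ i = true) ∨
    (u = none ∧ w = some i ∧ σ i = false)


section Aux
variable {n : ℕ} (σ : Fin n → Bool)

lemma sink_weight (g : Option (Fin n) → ℕ) (i : Fin n) (hi : σ i = false) :
    weightD (starArc n σ) {1, 2} g (some i) = 0 := by
  unfold weightD
  apply Finset.sum_eq_zero
  intro v _
  rw [if_neg]
  rintro ⟨k, hk, hrel, -⟩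
  simp only [Set.mem_insert_iff, Set.mem_singleton_iff] at hk
  have hstep : ∃ w, starArc n σ (some i) w := by
    rcases hk with rfl | rfl
    · obtain ⟨w, hw, -⟩ := hrel; exact ⟨w, hw⟩
    · obtain ⟨w, hw, -⟩ := hrel; exact ⟨w, hw⟩
  obtain ⟨w, j, ⟨h1, h2, h3⟩ | ⟨h1, h2⟩⟩ := hstep
  · cases Option.some.inj h1; rw [hi] at h3; exact Bool.false_ne_true h3
  · exact Option.some_ne_none _ h1

lemma source_cond (i : Fin n) (hi : σ i = true) (v : Option (Fin n)) :
    (∃ k ∈ ({1, 2} : Set ℕ), distEq (starArc n σ) (some i) v k) ↔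
      (v = none ∨ ∃ m, v = some m ∧ σ m = false) := by
  constructor
  · rintro ⟨k, hk, hrel, -⟩
    simp only [Set.mem_insert_iff, Set.mem_singleton_iff] at hk
    rcases hk with rfl | rfl
    · obtain ⟨w, hw, hwv⟩ := hrel
      obtain ⟨j, ⟨h1, h2, h3⟩ | ⟨h1, h2⟩⟩ := hw
      · left; rw [← hwv, h2]
      · exact absurd h1 (fun h => nomatch h)
    · obtain ⟨w, hw, w', hw', hwv⟩ := hrel
      have hwn : w = none := by
        obtain ⟨j, ⟨h1, h2, h3⟩ | ⟨h1, h2⟩⟩ := hw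
        · exact h2
        · exact absurd h1 (fun h => nomatch h)
      subst hwn
      obtain ⟨j, ⟨h1, h2, h3⟩ | ⟨h1, h2, h3⟩⟩ := hw'
      · exact absurd h1 (fun h => nomatch h)
      · right; exact ⟨j, by rw [← hwv, h2], h3⟩
  · rintro (rfl | ⟨m, rfl, hm⟩)
    · refine ⟨1, by simp, ⟨none, ⟨i, Or.inl ⟨rfl, rfl, hi⟩⟩, rfl⟩, ?_⟩
      intro j hj hrel
      interval_cases j
      exact Option.some_ne_none _ hrel
    · refine ⟨2, by simp, ⟨none, ⟨i, Or.inl ⟨rfl, rfl, hi⟩⟩,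
        some m, ⟨m, Or.inr ⟨rfl, rfl, hm⟩⟩, rfl⟩, ?_⟩
      intro j hj hrel
      interval_cases j
      · cases Option.some.inj hrel; rw [hi] at hm; exact Bool.noConfusion hm
      · obtain ⟨w, hw, hwv⟩ := hrel
        obtain ⟨j, ⟨h1, h2, h3⟩ | ⟨h1, h2⟩⟩ := hw
        · rw [h2] at hwv; exact Option.some_ne_none m (Eq.symm hwv)
        · exact absurd h1 (fun h => nomatch h)

lemma source_weight (g : Option (Fin n) → ℕ) (i j : Fin n) (hi : σ i = true)
    (hj : σ j = true) :
    weightD (starArc n σ) {1, 2} g (some i) = weightD (starArc n σ) {1, 2} g (some j) := by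
  unfold weightD
  refine Finset.sum_congr rfl fun v _ => ?_
  rw [show (∃ k ∈ ({1, 2} : Set ℕ), distEq (starArc n σ) (some i) v k) = _ from
      propext (source_cond σ i hi v),
    show (∃ k ∈ ({1, 2} : Set ℕ), distEq (starArc n σ) (some j) v k) = _ from
      propext (source_cond σ j hj v)]

end Aux

/-- If an oriented star `K⃗_{1,n}` with `n ≥ 2` is `{1,2}`-antimagic,
then it has exactly one leaf that is a sink and exactly one leaf that is a source;
in particular `n = 2`. -/
theorem orientedStar_oneTwo_antimagic_structure (n : ℕ) (hn : 2 ≤ n)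
    (σ : Fin n → Bool) (h : IsDAntimagic (starArc n σ) {1, 2}) :
    (∃! i : Fin n, σ i = false) ∧ (∃! i : Fin n, σ i = true) ∧ n = 2 := by
  obtain ⟨g, hbij, hinj⟩ := h
  have sink_ss : ∀ i j : Fin n, σ i = false → σ j = false → i = j := by
    intro i j hi hj
    have heq : weightD (starArc n σ) {1, 2} g (some i)
        = weightD (starArc n σ) {1, 2} g (some j) := by
      rw [sink_weight σ g i hi, sink_weight σ g j hj]
    exact Option.some.inj (hinj heq)
  have src_ss : ∀ i j : Fin n, σ i = true → σ j = true → i = j := by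
    intro i j hi hj
    exact Option.some.inj (hinj (source_weight σ g i j hi hj))
  have h01 : (⟨0, by omega⟩ : Fin n) ≠ ⟨1, by omega⟩ := by
    exact Fin.ne_of_val_ne (by simp)
  have hsink : ∃ i : Fin n, σ i = false := by
    by_contra hc
    push_neg at hc
    exact h01 (src_ss _ _ (Bool.not_eq_false _ ▸ hc _) (Bool.not_eq_false _ ▸ hc _))
  have hsrc : ∃ i : Fin n, σ i = true := by
    by_contra hc
    push_neg at hc
    exact h01 (sink_ss _ _ (Bool.not_eq_true _ ▸ hc _) (Bool.not_eq_true _ ▸ hc _))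
  obtain ⟨i0, hi0⟩ := hsink
  obtain ⟨i1, hi1⟩ := hsrc
  refine ⟨⟨i0, hi0, fun y hy => sink_ss y i0 hy hi0⟩,
    ⟨i1, hi1, fun y hy => src_ss y i1 hy hi1⟩, ?_⟩
  have hsub : (Finset.univ : Finset (Fin n)) ⊆ {i0, i1} := by
    intro i _
    rcases Bool.eq_false_or_eq_true (σ i) with hb | hb
    · simp [src_ss i i1 hb hi1]
    · simp [sink_ss i i0 hb hi0]
  have hle : n ≤ 2 := by
    calc n = (Finset.univ : Finset (Fin n)).card := by simp
    _ ≤ ({i0, i1} : Finset (Fin n)).card := Finset.card_le_card hsub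
    _ ≤ 2 := Finset.card_insert_le _ _ |>.trans (by simp)
  omega
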